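/- Let γ : A × A → ℝ be a continuous symmetric function of negative type on a metric space A, let S ⊆ A be measurable, and let P, Q be probability measures on A with P(S) > 0 and Q(S) > 0 and γ integrable against the relevant product measures. Then 2·[∫_S∫_S γ dP dQ / (P(S)Q(S))] − [∫_S∫_S γ dP dP / P(S)²] − [∫_S∫_S γ dQ dQ / Q(S)²] ≥ 0. -/

import Mathlib

open MeasureTheory Set Function

section AuxLemmas

variable {A : Type*} [MeasurableSpace A]

lemma pi_map_pair {A : Type*} [MeasurableSpace A] {ι : Type*} [Fintype ι] [DecidableEq ι]
    (ν : ι → Measure A) [∀ i, IsProbabilityMeasure (ν i)] {i j : ι} (hij : i ≠ j) :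
    (Measure.pi ν).map (fun z => (z i, z j)) = (ν i).prod (ν j) := by
  symm
  apply Measure.prod_eq
  intro s t hs ht
  rw [Measure.map_apply (by fun_prop) (hs.prod ht)]
  have hpre : (fun z : ι → A => (z i, z j)) ⁻¹' (s ×ˢ t)
      = univ.pi (update (update (fun _ => (univ : Set A)) i s) j t) := by
    ext z
    simp only [mem_preimage, mem_prod, mem_pi, mem_univ, forall_true_left]
    constructor
    · rintro ⟨h1, h2⟩ k
      rcases eq_or_ne k j with rfl | hkj
      · simpa
      rcases eq_or_ne k i with rfl | hki
      · simp [update_of_ne hij, h1]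
      · simp [update_of_ne hkj, update_of_ne hki]
    · intro h
      refine ⟨?_, ?_⟩
      · have := h i
        simpa [update_of_ne hij] using this
      · simpa using h j
  rw [hpre, Measure.pi_pi]
  rw [← Finset.mul_prod_erase _ _ (Finset.mem_univ i),
      ← Finset.mul_prod_erase _ _ (Finset.mem_erase.2 ⟨hij.symm, Finset.mem_univ j⟩)]
  have h1 : ∀ k ∈ (Finset.univ.erase i).erase j,
      (ν k) (update (update (fun _ => (univ : Set A)) i s) j t k) = 1 := by
    intro k hk
    rcases Finset.mem_erase.1 hk with ⟨hkj, hk2⟩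
    rcases Finset.mem_erase.1 hk2 with ⟨hki, -⟩
    simp [update_of_ne hkj, update_of_ne hki]
  rw [Finset.prod_congr rfl h1]
  simp [update_of_ne hij]
lemma bounded_psd_energy {A : Type*} [MeasurableSpace A] (κ : A → A → ℝ) (M : ℝ)
    (hbound : ∀ x y, |κ x y| ≤ M)
    (hsym : ∀ x y, κ x y = κ y x)
    (hdiag : Measurable fun x => κ x x)
    (hpsd : ∀ (n : ℕ) (x : Fin n → A) (c : Fin n → ℝ),
      0 ≤ ∑ i, ∑ j, c i * c j * κ (x i) (x j))
    (ρ σ : Measure A) [IsProbabilityMeasure ρ] [IsProbabilityMeasure σ]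
    (hmρρ : AEStronglyMeasurable (fun p : A × A => κ p.1 p.2) (ρ.prod ρ))
    (hmρσ : AEStronglyMeasurable (fun p : A × A => κ p.1 p.2) (ρ.prod σ))
    (hmσρ : AEStronglyMeasurable (fun p : A × A => κ p.1 p.2) (σ.prod ρ))
    (hmσσ : AEStronglyMeasurable (fun p : A × A => κ p.1 p.2) (σ.prod σ)) :
    0 ≤ ∫ p, κ p.1 p.2 ∂(ρ.prod ρ) + ∫ p, κ p.1 p.2 ∂(σ.prod σ)
        - 2 * ∫ p, κ p.1 p.2 ∂(ρ.prod σ) := by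
  haveI : Nonempty A := by
    rcases isEmpty_or_nonempty A with h | h
    · exfalso
      have h0 : ρ univ = 1 := measure_univ
      rw [Set.univ_eq_empty_iff.2 h] at h0
      simp at h0
    · exact h
  set Ipp := ∫ p, κ p.1 p.2 ∂(ρ.prod ρ) with hIpp
  set Ipq := ∫ p, κ p.1 p.2 ∂(ρ.prod σ) with hIpq
  set Iqq := ∫ p, κ p.1 p.2 ∂(σ.prod σ) with hIqq
  have hM : 0 ≤ M := le_trans (abs_nonneg _) (hbound Classical.ofNonempty Classical.ofNonempty)
  have hswap : ∫ p, κ p.1 p.2 ∂(σ.prod ρ) = Ipq := by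
    rw [← Measure.prod_swap]
    rw [integral_map measurable_swap.aemeasurable (by rwa [Measure.prod_swap])]
    simp only [Prod.snd_swap, Prod.fst_swap, Prod.swap]
    exact integral_congr_ae (Filter.Eventually.of_forall fun p => hsym p.2 p.1)
  have key : ∀ n : ℕ, 0 < n → -(4 * M) / n ≤ Ipp + Iqq - 2 * Ipq := by
    intro n hn
    have hn' : (0:ℝ) < n := by exact_mod_cast hn
    set ν : Fin n ⊕ Fin n → Measure A := Sum.elim (fun _ => ρ) (fun _ => σ) with hν
    haveI : ∀ i, IsProbabilityMeasure (ν i) := by rintro (a | a) <;> simpa [hν]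
    set π := Measure.pi ν with hπ
    haveI : IsProbabilityMeasure π := by rw [hπ]; infer_instance
    set c : Fin n ⊕ Fin n → ℝ := Sum.elim (fun _ => (1:ℝ)) (fun _ => (-1:ℝ)) with hc
    have hc1 : ∀ i, c i * c i = 1 := by rintro (a | a) <;> simp [hc]
    have hprodm : ∀ i j : Fin n ⊕ Fin n, AEStronglyMeasurable (fun p : A × A => κ p.1 p.2)
        ((ν i).prod (ν j)) := by
      rintro (a | a) (b | b) <;> simpa [hν]
    have hAemeas : ∀ i j : Fin n ⊕ Fin n, AEStronglyMeasurable (fun z : Fin n ⊕ Fin n → A => κ (z i) (z j)) π := by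
      intro i j
      rcases eq_or_ne i j with rfl | hij
      · exact ((hdiag.comp (measurable_pi_apply i)).stronglyMeasurable).aestronglyMeasurable
      · have : AEStronglyMeasurable (fun p : A × A => κ p.1 p.2)
            (π.map (fun z => (z i, z j))) := by rw [hπ, pi_map_pair ν hij]; exact hprodm i j
        exact this.comp_aemeasurable (by fun_prop)
    have hInt : ∀ i j : Fin n ⊕ Fin n, Integrable (fun z : Fin n ⊕ Fin n → A => κ (z i) (z j)) π := by
      intro i j
      refine Integrable.mono' (integrable_const M) (hAemeas i j) ?_
      exact Filter.Eventually.of_forall fun z => by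
        simpa [Real.norm_eq_abs] using hbound (z i) (z j)
    -- pointwise positivity
    have hpos : ∀ z : Fin n ⊕ Fin n → A, 0 ≤ ∑ i, ∑ j, c i * c j * κ (z i) (z j) := by
      intro z
      have e := Fintype.equivFin (Fin n ⊕ Fin n)
      calc (0:ℝ) ≤ ∑ k, ∑ l, c (e.symm k) * c (e.symm l) * κ (z (e.symm k)) (z (e.symm l)) :=
            hpsd (Fintype.card (Fin n ⊕ Fin n)) (fun k => z (e.symm k)) (fun k => c (e.symm k))
        _ = ∑ i, ∑ j, c i * c j * κ (z i) (z j) := by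
            rw [← Equiv.sum_comp e.symm (fun i => ∑ j, c i * c j * κ (z i) (z j))]
            exact Finset.sum_congr rfl fun k _ =>
              Fintype.sum_equiv e.symm _ _ fun l => rfl
    have h0 : 0 ≤ ∫ z, (∑ i, ∑ j, c i * c j * κ (z i) (z j)) ∂π :=
      integral_nonneg hpos
    have hsplit : ∫ z, (∑ i, ∑ j, c i * c j * κ (z i) (z j)) ∂π
        = ∑ i, ∑ j, c i * c j * ∫ z, κ (z i) (z j) ∂π := by
      rw [integral_finset_sum _ (fun i _ =>
        integrable_finset_sum _ (fun j _ => ((hInt i j).const_mul _)))]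
      refine Finset.sum_congr rfl fun i _ => ?_
      rw [integral_finset_sum _ (fun j _ => (hInt i j).const_mul _)]
      exact Finset.sum_congr rfl fun j _ => integral_const_mul _ _
    set B : Fin n ⊕ Fin n → Fin n ⊕ Fin n → ℝ := fun i j => ∫ p, κ p.1 p.2 ∂((ν i).prod (ν j)) with hB
    have hBval : ∀ i j : Fin n ⊕ Fin n, i ≠ j → ∫ z, κ (z i) (z j) ∂π = B i j := by
      intro i j hij
      show _ = ∫ p : A × A, κ p.1 p.2 ∂((ν i).prod (ν j))
      rw [← pi_map_pair ν hij, ← hπ,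
        integral_map (by fun_prop) (by rw [hπ, pi_map_pair ν hij]; exact hprodm i j)]
    have hBbound : ∀ i j : Fin n ⊕ Fin n, |B i j| ≤ M := by
      intro i j
      have := norm_integral_le_of_norm_le_const (μ := (ν i).prod (ν j))
        (f := fun p : A × A => κ p.1 p.2) (C := M)
        (Filter.Eventually.of_forall fun p => by simpa [Real.norm_eq_abs] using hbound p.1 p.2)
      simpa [Real.norm_eq_abs] using this
    have hDbound : ∀ i : Fin n ⊕ Fin n, |∫ z, κ (z i) (z i) ∂π| ≤ M := by
      intro i
      have := norm_integral_le_of_norm_le_const (μ := π)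
        (f := fun z : Fin n ⊕ Fin n → A => κ (z i) (z i)) (C := M)
        (Filter.Eventually.of_forall fun z => by simpa [Real.norm_eq_abs] using hbound (z i) (z i))
      simpa [Real.norm_eq_abs] using this
    -- compute the "block" double sum
    have hcompute : ∑ i, ∑ j, c i * c j * B i j = (n:ℝ)^2 * (Ipp + Iqq - 2 * Ipq) := by
      have hBpp : ∀ a b : Fin n, B (Sum.inl a) (Sum.inl b) = Ipp := fun a b => by
        simp [hB, hν, hIpp]
      have hBpq : ∀ a b : Fin n, B (Sum.inl a) (Sum.inr b) = Ipq := fun a b => by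
        simp [hB, hν, hIpq]
      have hBqp : ∀ a b : Fin n, B (Sum.inr a) (Sum.inl b) = Ipq := fun a b => by
        simp only [hB, hν, Sum.elim_inr, Sum.elim_inl]; exact hswap
      have hBqq : ∀ a b : Fin n, B (Sum.inr a) (Sum.inr b) = Iqq := fun a b => by
        simp [hB, hν, hIqq]
      rw [Fintype.sum_sum_type]
      simp only [Fintype.sum_sum_type, hc, Sum.elim_inl, Sum.elim_inr]
      simp only [hBpp, hBpq, hBqp, hBqq, Finset.sum_const, Finset.card_univ,
        Fintype.card_fin, nsmul_eq_mul, one_mul, mul_one, neg_mul, mul_neg, neg_neg]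
      ring
    -- relate the two double sums via the diagonal
    have hrelate : ∑ i, ∑ j, c i * c j * ∫ z, κ (z i) (z j) ∂π
        = (∑ i, ∑ j, c i * c j * B i j)
          + ∑ i : Fin n ⊕ Fin n, ((∫ z, κ (z i) (z i) ∂π) - B i i) := by
      rw [← Finset.sum_add_distrib]
      refine Finset.sum_congr rfl fun i _ => ?_
      have h1 : ∀ j ∈ Finset.univ.erase i,
          c i * c j * ∫ z, κ (z i) (z j) ∂π = c i * c j * B i j := fun j hj => by
        rw [hBval i j (Finset.ne_of_mem_erase hj).symm]
      rw [← Finset.add_sum_erase _ _ (Finset.mem_univ i),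
          ← Finset.add_sum_erase _ (fun j => c i * c j * B i j) (Finset.mem_univ i),
          Finset.sum_congr rfl h1, hc1 i]
      ring
    -- diagonal bound
    have hdiagbound : ∑ i : Fin n ⊕ Fin n, ((∫ z, κ (z i) (z i) ∂π) - B i i)
        ≤ (2*n :ℝ) * (2*M) := by
      have hterm : ∀ i : Fin n ⊕ Fin n, (∫ z, κ (z i) (z i) ∂π) - B i i ≤ 2*M := by
        intro i
        have h1 := abs_le.1 (hDbound i)
        have h2 := abs_le.1 (hBbound i i)
        linarith [h1.2, h2.1]
      have hcard : ((Fintype.card (Fin n ⊕ Fin n) : ℕ) : ℝ) = 2 * n := by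
        simp [Fintype.card_sum]; push_cast; ring
      calc ∑ i : Fin n ⊕ Fin n, ((∫ z, κ (z i) (z i) ∂π) - B i i)
          ≤ ∑ _i : Fin n ⊕ Fin n, 2*M := Finset.sum_le_sum fun i _ => hterm i
        _ = (Fintype.card (Fin n ⊕ Fin n) : ℝ) * (2*M) := by
            rw [Finset.sum_const, Finset.card_univ, nsmul_eq_mul]
        _ = (2*n:ℝ) * (2*M) := by rw [hcard]
    have hfinal : 0 ≤ (n:ℝ)^2 * (Ipp + Iqq - 2 * Ipq) + ∑ i : Fin n ⊕ Fin n, ((∫ z, κ (z i) (z i) ∂π) - B i i) := by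
      rw [← hcompute, ← hrelate, ← hsplit]; exact h0
    have h2 : -(4 * M) * n ≤ (n:ℝ)^2 * (Ipp + Iqq - 2 * Ipq) := by nlinarith [hdiagbound, hfinal]
    rw [div_le_iff₀ hn']
    nlinarith [h2, hn']
  have hten : Filter.Tendsto (fun n : ℕ => -(4 * M) / n) Filter.atTop (nhds 0) := by
    simpa using Filter.Tendsto.div_atTop (tendsto_const_nhds : Filter.Tendsto
      (fun _ : ℕ => -(4*M)) Filter.atTop (nhds (-(4*M)))) tendsto_natCast_atTop_atTop
  refine le_of_tendsto hten ?_
  filter_upwards [Filter.eventually_gt_atTop 0] with n hn using key n hn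
lemma psd_kernel_of_negType {A : Type*} (γ : A → A → ℝ)
    (hsymm : ∀ x y, γ x y = γ y x)
    (hneg : ∀ (n : ℕ) (x : Fin n → A) (c : Fin n → ℝ), (∑ i, c i) = 0 →
      (∑ i, ∑ j, c i * c j * γ (x i) (x j)) ≤ 0)
    (o : A) (m : ℕ) (x : Fin m → A) (c : Fin m → ℝ) :
    0 ≤ ∑ i, ∑ j, c i * c j * (γ (x i) o + γ (x j) o - γ (x i) (x j) - γ o o) := by
  set s := ∑ i, c i with hs
  set T := ∑ i, c i * γ (x i) o with hT
  set G := ∑ i, ∑ j, c i * c j * γ (x i) (x j) with hG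
  have H := hneg (m+1) (Fin.cons o x) (Fin.cons (-s) c) (by rw [Fin.sum_cons]; simp [hs])
  have hkey : ∑ i : Fin (m+1), ∑ j : Fin (m+1),
      (Fin.cons (-s) c : Fin (m+1) → ℝ) i * (Fin.cons (-s) c : Fin (m+1) → ℝ) j *
        γ ((Fin.cons o x : Fin (m+1) → A) i) ((Fin.cons o x : Fin (m+1) → A) j)
      = s*s*γ o o - 2*(s*T) + G := by
    simp only [Fin.sum_univ_succ, Fin.cons_zero, Fin.cons_succ]
    have e1 : ∑ j, -s * c j * γ o (x j) = -(s*T) := by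
      have h : ∀ j, -s * c j * γ o (x j) = -s * (c j * γ (x j) o) := fun j => by
        rw [hsymm o (x j)]; ring
      rw [Finset.sum_congr rfl fun j _ => h j, ← Finset.mul_sum, ← hT]; ring
    have e2 : ∑ i, (c i * -s * γ (x i) o + ∑ j, c i * c j * γ (x i) (x j))
        = -(s*T) + G := by
      have h : ∀ i, c i * -s * γ (x i) o = -s * (c i * γ (x i) o) := fun i => by ring
      rw [Finset.sum_add_distrib, Finset.sum_congr rfl fun i _ => h i,
        ← Finset.mul_sum, ← hT, ← hG]
      ring
    rw [e1, e2]; ring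
  have hgoal : ∑ i, ∑ j, c i * c j * (γ (x i) o + γ (x j) o - γ (x i) (x j) - γ o o)
      = 2*(s*T) - G - s*s*γ o o := by
    have expand : ∀ i j : Fin m,
        c i * c j * (γ (x i) o + γ (x j) o - γ (x i) (x j) - γ o o)
        = (c i * γ (x i) o) * c j + c i * (c j * γ (x j) o)
          - c i * c j * γ (x i) (x j) - c i * (c j * γ o o) := fun i j => by ring
    simp only [expand]
    simp only [Finset.sum_sub_distrib, Finset.sum_add_distrib, ← Finset.mul_sum,
      ← Finset.sum_mul, ← hT, ← hs, ← hG]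
    ring
  rw [hgoal]
  rw [hkey] at H
  linarith
lemma psd_diag_nonneg {A : Type*} (k : A → A → ℝ)
    (hpsd : ∀ (m : ℕ) (x : Fin m → A) (c : Fin m → ℝ),
      0 ≤ ∑ i, ∑ j, c i * c j * k (x i) (x j)) (x : A) : 0 ≤ k x x := by
  have := hpsd 1 ![x] ![1]
  simpa using this

lemma psd_cauchy_schwarz {A : Type*} (k : A → A → ℝ)
    (hpsd : ∀ (m : ℕ) (x : Fin m → A) (c : Fin m → ℝ),
      0 ≤ ∑ i, ∑ j, c i * c j * k (x i) (x j))
    (hksym : ∀ x y, k x y = k y x) (x y : A) : (k x y)^2 ≤ k x x * k y y := by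
  have h2 : ∀ t : ℝ, 0 ≤ k x x * (t*t) + (2 * k x y) * t + k y y := by
    intro t
    have := hpsd 2 ![x, y] ![t, 1]
    simp [Fin.sum_univ_two] at this
    rw [hksym y x] at this
    nlinarith [this]
  have hd := discrim_le_zero h2
  rw [discrim] at hd
  nlinarith [hd]
lemma trunc_kernel_bound (a b v M : ℝ) (ha : 0 ≤ a) (hb : 0 ≤ b) (hM : 1 ≤ M)
    (hv : v^2 ≤ a * b) :
    |(Real.sqrt (1 + a/M))⁻¹ * (Real.sqrt (1 + b/M))⁻¹ * v| ≤ M := by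
  have hM0 : (0:ℝ) < M := by linarith
  have key : ∀ t : ℝ, 0 ≤ t → (Real.sqrt (1 + t/M))⁻¹ * Real.sqrt t ≤ Real.sqrt M := by
    intro t ht
    rw [← Real.sqrt_inv, ← Real.sqrt_mul (by positivity)]
    apply Real.sqrt_le_sqrt
    have h1 : (0:ℝ) < 1 + t/M := by positivity
    rw [inv_mul_le_iff₀ h1]
    have hMM : (1 + t/M) * M = M + t := by field_simp
    linarith
  have hua : (0:ℝ) ≤ (Real.sqrt (1+a/M))⁻¹ := by positivity
  have hub : (0:ℝ) ≤ (Real.sqrt (1+b/M))⁻¹ := by positivity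
  have hv' : |v| ≤ Real.sqrt a * Real.sqrt b := by
    calc |v| = Real.sqrt (v^2) := (Real.sqrt_sq_eq_abs v).symm
      _ ≤ Real.sqrt (a*b) := Real.sqrt_le_sqrt hv
      _ = Real.sqrt a * Real.sqrt b := Real.sqrt_mul ha b
  calc |(Real.sqrt (1 + a/M))⁻¹ * (Real.sqrt (1 + b/M))⁻¹ * v|
      = (Real.sqrt (1+a/M))⁻¹ * (Real.sqrt (1+b/M))⁻¹ * |v| := by
        rw [abs_mul, abs_mul, abs_of_nonneg hua, abs_of_nonneg hub]
    _ ≤ (Real.sqrt (1+a/M))⁻¹ * (Real.sqrt (1+b/M))⁻¹ * (Real.sqrt a * Real.sqrt b) := by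
        apply mul_le_mul_of_nonneg_left hv' (by positivity)
    _ = ((Real.sqrt (1+a/M))⁻¹ * Real.sqrt a) * ((Real.sqrt (1+b/M))⁻¹ * Real.sqrt b) := by ring
    _ ≤ Real.sqrt M * Real.sqrt M :=
        mul_le_mul (key a ha) (key b hb) (by positivity) (Real.sqrt_nonneg M)
    _ = M := Real.mul_self_sqrt hM0.le
lemma smul_prod_smul (μ ν : Measure A) [IsFiniteMeasure μ] [IsFiniteMeasure ν]
    (c d : ENNReal) (hc : c ≠ ⊤) (hd : d ≠ ⊤) :
    (c • μ).prod (d • ν) = (c * d) • (μ.prod ν) := by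
  haveI : IsFiniteMeasure (c • μ) :=
    ⟨by simp only [Measure.smul_apply, smul_eq_mul]
        exact ENNReal.mul_lt_top hc.lt_top (measure_lt_top μ univ)⟩
  haveI : IsFiniteMeasure (d • ν) :=
    ⟨by simp only [Measure.smul_apply, smul_eq_mul]
        exact ENNReal.mul_lt_top hd.lt_top (measure_lt_top ν univ)⟩
  refine Measure.prod_eq (μ := c • μ) (ν := d • ν) fun s t hs ht => ?_
  simp only [Measure.smul_apply, smul_eq_mul, Measure.prod_prod]
  ring

lemma integrable_comp_fst {μ ν : Measure A} [SigmaFinite ν] [IsProbabilityMeasure ν]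
    {f : A → ℝ} (hf : Integrable f μ) :
    Integrable (fun p : A × A => f p.1) (μ.prod ν) := by
  have hmap : (μ.prod ν).map Prod.fst = μ := by
    rw [Measure.map_fst_prod]; simp
  have h1 : AEStronglyMeasurable f ((μ.prod ν).map Prod.fst) := by
    rw [hmap]; exact hf.aestronglyMeasurable
  exact (integrable_map_measure h1 measurable_fst.aemeasurable).1 (by rwa [hmap])

lemma integrable_comp_snd {μ ν : Measure A} [SigmaFinite ν] [IsProbabilityMeasure μ]
    {f : A → ℝ} (hf : Integrable f ν) :
    Integrable (fun p : A × A => f p.2) (μ.prod ν) := by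
  have hmap : (μ.prod ν).map Prod.snd = ν := by
    rw [Measure.map_snd_prod]; simp
  have h1 : AEStronglyMeasurable f ((μ.prod ν).map Prod.snd) := by
    rw [hmap]; exact hf.aestronglyMeasurable
  exact (integrable_map_measure h1 measurable_snd.aemeasurable).1 (by rwa [hmap])

lemma integral_comp_fst {μ ν : Measure A} [SigmaFinite ν] [IsProbabilityMeasure ν]
    {f : A → ℝ} (hf : AEStronglyMeasurable f μ) :
    ∫ p : A × A, f p.1 ∂(μ.prod ν) = ∫ x, f x ∂μ := by
  have hmap : (μ.prod ν).map Prod.fst = μ := by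
    rw [Measure.map_fst_prod]; simp
  calc ∫ p : A × A, f p.1 ∂(μ.prod ν)
      = ∫ x, f x ∂((μ.prod ν).map Prod.fst) :=
        (integral_map measurable_fst.aemeasurable (by rwa [hmap])).symm
    _ = ∫ x, f x ∂μ := by rw [hmap]

lemma integral_comp_snd {μ ν : Measure A} [SigmaFinite ν] [IsProbabilityMeasure μ]
    {f : A → ℝ} (hf : AEStronglyMeasurable f ν) :
    ∫ p : A × A, f p.2 ∂(μ.prod ν) = ∫ x, f x ∂ν := by
  have hmap : (μ.prod ν).map Prod.snd = ν := by
    rw [Measure.map_snd_prod]; simp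
  calc ∫ p : A × A, f p.2 ∂(μ.prod ν)
      = ∫ x, f x ∂((μ.prod ν).map Prod.snd) :=
        (integral_map measurable_snd.aemeasurable (by rwa [hmap])).symm
    _ = ∫ x, f x ∂ν := by rw [hmap]

end AuxLemmas

theorem normalized_energy_nonneg
    {A : Type*} [MetricSpace A] [MeasurableSpace A] [BorelSpace A]
    (γ : A → A → ℝ)
    (hcont : Continuous fun p : A × A => γ p.1 p.2)
    (hsymm : ∀ x y, γ x y = γ y x)
    (hneg : ∀ (n : ℕ) (x : Fin n → A) (c : Fin n → ℝ), (∑ i, c i) = 0 →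
      (∑ i, ∑ j, c i * c j * γ (x i) (x j)) ≤ 0)
    (S : Set A) (hS : MeasurableSet S)
    (P Q : Measure A) [IsProbabilityMeasure P] [IsProbabilityMeasure Q]
    (hPS : 0 < (P S).toReal) (hQS : 0 < (Q S).toReal)
    (hPQ : Integrable (fun p : A × A => γ p.1 p.2) ((P.restrict S).prod (Q.restrict S)))
    (hPP : Integrable (fun p : A × A => γ p.1 p.2) ((P.restrict S).prod (P.restrict S)))
    (hQQ : Integrable (fun p : A × A => γ p.1 p.2) ((Q.restrict S).prod (Q.restrict S))) :
    0 ≤ 2 * ((∫ x in S, ∫ y in S, γ x y ∂Q ∂P) / ((P S).toReal * (Q S).toReal))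
        - ((∫ x in S, ∫ y in S, γ x y ∂P ∂P) / ((P S).toReal) ^ 2)
        - ((∫ x in S, ∫ y in S, γ x y ∂Q ∂Q) / ((Q S).toReal) ^ 2) := by
  classical
  have hP0 : P S ≠ 0 := fun h => by simp [h] at hPS
  have hQ0 : Q S ≠ 0 := fun h => by simp [h] at hQS
  have hPtop : P S ≠ ⊤ := measure_ne_top P S
  have hQtop : Q S ≠ ⊤ := measure_ne_top Q S
  have hPinv : (P S)⁻¹ ≠ ⊤ := ENNReal.inv_ne_top.2 hP0
  have hQinv : (Q S)⁻¹ ≠ ⊤ := ENNReal.inv_ne_top.2 hQ0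
  set Pr := P.restrict S with hPr
  set Qr := Q.restrict S with hQr
  haveI : IsFiniteMeasure Pr := by rw [hPr]; infer_instance
  haveI : IsFiniteMeasure Qr := by rw [hQr]; infer_instance
  set ρ : Measure A := (P S)⁻¹ • Pr with hρ
  set σ : Measure A := (Q S)⁻¹ • Qr with hσ
  haveI hρprob : IsProbabilityMeasure ρ := by
    constructor
    rw [hρ]
    simp only [Measure.smul_apply, smul_eq_mul, hPr, Measure.restrict_apply_univ]
    exact ENNReal.inv_mul_cancel hP0 hPtop
  haveI hσprob : IsProbabilityMeasure σ := by
    constructor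
    rw [hσ]
    simp only [Measure.smul_apply, smul_eq_mul, hQr, Measure.restrict_apply_univ]
    exact ENNReal.inv_mul_cancel hQ0 hQtop
  -- product identities
  have hprod_ρσ : ρ.prod σ = ((P S)⁻¹ * (Q S)⁻¹) • (Pr.prod Qr) :=
    smul_prod_smul Pr Qr _ _ hPinv hQinv
  have hprod_ρρ : ρ.prod ρ = ((P S)⁻¹ * (P S)⁻¹) • (Pr.prod Pr) :=
    smul_prod_smul Pr Pr _ _ hPinv hPinv
  have hprod_σσ : σ.prod σ = ((Q S)⁻¹ * (Q S)⁻¹) • (Qr.prod Qr) :=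
    smul_prod_smul Qr Qr _ _ hQinv hQinv
  have hprod_σρ : σ.prod ρ = ((Q S)⁻¹ * (P S)⁻¹) • (Qr.prod Pr) :=
    smul_prod_smul Qr Pr _ _ hQinv hPinv
  -- integrability of γ on the normalized products
  have hQP : Integrable (fun p : A × A => γ p.1 p.2) (Qr.prod Pr) := by
    have h1 : Integrable ((fun p : A × A => γ p.1 p.2) ∘ Prod.swap) (Qr.prod Pr) := hPQ.swap
    have h2 : ((fun p : A × A => γ p.1 p.2) ∘ Prod.swap) = fun p : A × A => γ p.1 p.2 :=
      funext fun p => hsymm p.2 p.1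
    rwa [h2] at h1
  have hIρσ : Integrable (fun p : A × A => γ p.1 p.2) (ρ.prod σ) := by
    rw [hprod_ρσ]; exact hPQ.smul_measure (ENNReal.mul_ne_top hPinv hQinv)
  have hIρρ : Integrable (fun p : A × A => γ p.1 p.2) (ρ.prod ρ) := by
    rw [hprod_ρρ]; exact hPP.smul_measure (ENNReal.mul_ne_top hPinv hPinv)
  have hIσσ : Integrable (fun p : A × A => γ p.1 p.2) (σ.prod σ) := by
    rw [hprod_σσ]; exact hQQ.smul_measure (ENNReal.mul_ne_top hQinv hQinv)
  have hIσρ : Integrable (fun p : A × A => γ p.1 p.2) (σ.prod ρ) := by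
    rw [hprod_σρ]; exact hQP.smul_measure (ENNReal.mul_ne_top hQinv hPinv)
  -- choose the base point o
  haveI : (ae σ).NeBot := ae_neBot.2 (IsProbabilityMeasure.ne_zero σ)
  have h1 : ∀ᵐ o ∂σ, Integrable (fun x => γ x o) ρ := hIρσ.prod_left_ae
  have h2 : ∀ᵐ o ∂σ, Integrable (fun y => γ o y) σ := hIσσ.prod_right_ae
  obtain ⟨o, ho1, ho2⟩ := (h1.and h2).exists
  have ho2' : Integrable (fun x => γ x o) σ := by
    have : (fun x => γ x o) = fun x => γ o x := funext fun x => hsymm x o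
    rwa [this]
  -- the PSD kernel k
  set k : A → A → ℝ := fun x y => γ x o + γ y o - γ x y - γ o o with hk
  have hkpsd : ∀ (m : ℕ) (x : Fin m → A) (c : Fin m → ℝ),
      0 ≤ ∑ i, ∑ j, c i * c j * k (x i) (x j) := fun m x c =>
    psd_kernel_of_negType γ hsymm hneg o m x c
  have hksym : ∀ x y, k x y = k y x := fun x y => by
    simp only [hk]; rw [hsymm x y]; ring
  have hkdiag : ∀ x, 0 ≤ k x x := psd_diag_nonneg k hkpsd
  have hkCS : ∀ x y, (k x y)^2 ≤ k x x * k y y := psd_cauchy_schwarz k hkpsd hksym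
  -- continuity facts
  have hγcont : ∀ y : A, Continuous fun x => γ x y := fun y =>
    hcont.comp (continuous_id.prodMk continuous_const)
  have hdiagγ : Continuous fun x => γ x x := hcont.comp (continuous_id.prodMk continuous_id)
  have hkdiagcont : Continuous fun x => k x x := by
    simp only [hk]
    exact (((hγcont o).add (hγcont o)).sub hdiagγ).sub continuous_const
  -- AE strong measurability of the kernel pair maps
  have hkAESM : ∀ (μ1 μ2 : Measure A),
      AEStronglyMeasurable (fun p : A × A => γ p.1 p.2) (μ1.prod μ2) →
      AEStronglyMeasurable (fun p : A × A => k p.1 p.2) (μ1.prod μ2) := by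
    intro μ1 μ2 hγm
    have m1 : AEStronglyMeasurable (fun p : A × A => γ p.1 o) (μ1.prod μ2) :=
      ((hγcont o).measurable.comp measurable_fst).aestronglyMeasurable
    have m2 : AEStronglyMeasurable (fun p : A × A => γ p.2 o) (μ1.prod μ2) :=
      ((hγcont o).measurable.comp measurable_snd).aestronglyMeasurable
    exact ((m1.add m2).sub hγm).sub aestronglyMeasurable_const
  -- integrability of the kernel pair maps
  have ho2'' : Integrable (fun y => γ y o) σ := ho2'
  have hIkρσ : Integrable (fun p : A × A => k p.1 p.2) (ρ.prod σ) := by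
    have h := (((integrable_comp_fst ho1).add (integrable_comp_snd ho2'')).sub hIρσ).sub
      (integrable_const (γ o o))
    exact h
  have hIkρρ : Integrable (fun p : A × A => k p.1 p.2) (ρ.prod ρ) := by
    have h := (((integrable_comp_fst ho1).add (integrable_comp_snd ho1)).sub hIρρ).sub
      (integrable_const (γ o o))
    exact h
  have hIkσσ : Integrable (fun p : A × A => k p.1 p.2) (σ.prod σ) := by
    have h := (((integrable_comp_fst ho2'').add (integrable_comp_snd ho2'')).sub hIσσ).sub
      (integrable_const (γ o o))
    exact h
  -- truncated kernels
  set u : ℕ → A → ℝ := fun m x => (Real.sqrt (1 + k x x / m))⁻¹ with hu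
  have hucont : ∀ m : ℕ, Continuous (u m) := by
    intro m
    apply Continuous.inv₀
    · exact Real.continuous_sqrt.comp (continuous_const.add (hkdiagcont.div_const _))
    · intro x
      have h1 : (0:ℝ) < 1 + k x x / m :=
        add_pos_of_pos_of_nonneg one_pos (div_nonneg (hkdiag x) (Nat.cast_nonneg m))
      exact (Real.sqrt_pos.2 h1).ne'
  have hu0 : ∀ m x, 0 ≤ u m x := fun m x => by rw [hu]; positivity
  have hu1 : ∀ m x, u m x ≤ 1 := by
    intro m x
    have h1 : (1:ℝ) ≤ 1 + k x x / m :=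
      le_add_of_nonneg_right (div_nonneg (hkdiag x) (Nat.cast_nonneg m))
    have h2 : (1:ℝ) ≤ Real.sqrt (1 + k x x / m) := by
      rw [show (1:ℝ) = Real.sqrt 1 from (Real.sqrt_one).symm]
      exact Real.sqrt_le_sqrt (by simpa using h1)
    rw [hu]
    exact inv_le_one_of_one_le₀ h2
  set km : ℕ → A → A → ℝ := fun m x y => u m x * u m y * k x y with hkm
  have hkmpsd : ∀ m : ℕ, ∀ (n : ℕ) (x : Fin n → A) (c : Fin n → ℝ),
      0 ≤ ∑ i, ∑ j, c i * c j * km m (x i) (x j) := by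
    intro m n x c
    calc (0:ℝ) ≤ ∑ i, ∑ j, (c i * u m (x i)) * (c j * u m (x j)) * k (x i) (x j) :=
          hkpsd n x (fun i => c i * u m (x i))
      _ = ∑ i, ∑ j, c i * c j * km m (x i) (x j) := by
          refine Finset.sum_congr rfl fun i _ => Finset.sum_congr rfl fun j _ => ?_
          simp only [hkm]; ring
  have hkmsym : ∀ (m : ℕ) x y, km m x y = km m y x := fun m x y => by
    simp only [hkm]; rw [hksym x y]; ring
  have hkmbound : ∀ m : ℕ, 1 ≤ m → ∀ x y, |km m x y| ≤ (m:ℝ) := by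
    intro m hm x y
    have := trunc_kernel_bound (k x x) (k y y) (k x y) m (hkdiag x) (hkdiag y)
      (by exact_mod_cast hm) (hkCS x y)
    simpa [hkm, hu] using this
  have hkmdiagmeas : ∀ m : ℕ, Measurable fun x => km m x x := fun m =>
    (((hucont m).mul (hucont m)).mul hkdiagcont).measurable
  have hkmAESM : ∀ (m : ℕ) (μ1 μ2 : Measure A),
      AEStronglyMeasurable (fun p : A × A => k p.1 p.2) (μ1.prod μ2) →
      AEStronglyMeasurable (fun p : A × A => km m p.1 p.2) (μ1.prod μ2) := by
    intro m μ1 μ2 hka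
    have h1 : AEStronglyMeasurable (fun p : A × A => u m p.1) (μ1.prod μ2) :=
      ((hucont m).measurable.comp measurable_fst).aestronglyMeasurable
    have h2 : AEStronglyMeasurable (fun p : A × A => u m p.2) (μ1.prod μ2) :=
      ((hucont m).measurable.comp measurable_snd).aestronglyMeasurable
    exact (h1.mul h2).mul hka
  -- energy of truncated kernel is nonnegative
  have hEm : ∀ m : ℕ, 1 ≤ m →
      0 ≤ ∫ p, km m p.1 p.2 ∂(ρ.prod ρ) + ∫ p, km m p.1 p.2 ∂(σ.prod σ)
          - 2 * ∫ p, km m p.1 p.2 ∂(ρ.prod σ) := by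
    intro m hm
    exact bounded_psd_energy (km m) m (hkmbound m hm) (hkmsym m) (hkmdiagmeas m) (hkmpsd m) ρ σ
      (hkmAESM m ρ ρ (hkAESM ρ ρ hIρρ.aestronglyMeasurable))
      (hkmAESM m ρ σ (hkAESM ρ σ hIρσ.aestronglyMeasurable))
      (hkmAESM m σ ρ (hkAESM σ ρ hIσρ.aestronglyMeasurable))
      (hkmAESM m σ σ (hkAESM σ σ hIσσ.aestronglyMeasurable))
  -- dominated convergence
  have tendsto_u : ∀ x : A, Filter.Tendsto (fun m : ℕ => u m x) Filter.atTop (nhds 1) := by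
    intro x
    have h1 : Filter.Tendsto (fun m : ℕ => k x x / m) Filter.atTop (nhds 0) :=
      tendsto_const_div_atTop_nhds_zero_nat _
    have h2 : Filter.Tendsto (fun m : ℕ => 1 + k x x / m) Filter.atTop (nhds 1) := by
      simpa using h1.const_add 1
    have h3 : Filter.Tendsto (fun m : ℕ => Real.sqrt (1 + k x x / m)) Filter.atTop (nhds 1) := by
      have := (Real.continuous_sqrt.tendsto 1).comp h2
      simpa [Real.sqrt_one, Function.comp_def] using this
    have h4 := h3.inv₀ (by norm_num)
    simpa [hu] using h4
  have hDCT : ∀ (μ1 μ2 : Measure A),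
      Integrable (fun p : A × A => k p.1 p.2) (μ1.prod μ2) →
      Filter.Tendsto (fun m : ℕ => ∫ p, km m p.1 p.2 ∂(μ1.prod μ2)) Filter.atTop
        (nhds (∫ p, k p.1 p.2 ∂(μ1.prod μ2))) := by
    intro μ1 μ2 hint
    refine tendsto_integral_of_dominated_convergence (fun p => |k p.1 p.2|)
      (fun m => hkmAESM m _ _ hint.aestronglyMeasurable) hint.abs ?_ ?_
    · intro m
      refine Filter.Eventually.of_forall fun p => ?_
      have hu12 : u m p.1 * u m p.2 ≤ 1 :=
        mul_le_one₀ (hu1 m p.1) (hu0 m p.2) (hu1 m p.2)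
      have h := mul_le_of_le_one_left (abs_nonneg (k p.1 p.2)) hu12
      simp only [hkm, Real.norm_eq_abs, abs_mul,
        abs_of_nonneg (hu0 m p.1), abs_of_nonneg (hu0 m p.2)]
      exact h
    · refine Filter.Eventually.of_forall fun p => ?_
      have hx := tendsto_u p.1
      have hy := tendsto_u p.2
      have := (hx.mul hy).mul (tendsto_const_nhds :
        Filter.Tendsto (fun _ : ℕ => k p.1 p.2) Filter.atTop (nhds (k p.1 p.2)))
      simpa [hkm] using this
  -- nonnegativity of the k-energy
  have hEk : 0 ≤ ∫ p, k p.1 p.2 ∂(ρ.prod ρ) + ∫ p, k p.1 p.2 ∂(σ.prod σ)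
      - 2 * ∫ p, k p.1 p.2 ∂(ρ.prod σ) := by
    have hT := ((hDCT ρ ρ hIkρρ).add (hDCT σ σ hIkσσ)).sub ((hDCT ρ σ hIkρσ).const_mul 2)
    refine ge_of_tendsto hT ?_
    filter_upwards [Filter.eventually_ge_atTop 1] with m hm using hEm m hm
  -- expand the k-integrals into γ-integrals
  have hsplit : ∀ (μ1 μ2 : Measure A) [IsProbabilityMeasure μ1] [IsProbabilityMeasure μ2],
      Integrable (fun x => γ x o) μ1 → Integrable (fun y => γ y o) μ2 →
      Integrable (fun p : A × A => γ p.1 p.2) (μ1.prod μ2) →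
      ∫ p, k p.1 p.2 ∂(μ1.prod μ2)
        = (∫ x, γ x o ∂μ1) + (∫ y, γ y o ∂μ2) - (∫ p, γ p.1 p.2 ∂(μ1.prod μ2)) - γ o o := by
    intro μ1 μ2 _ _ hi1 hi2 hi3
    have i1 : Integrable (fun p : A × A => γ p.1 o) (μ1.prod μ2) := integrable_comp_fst hi1
    have i2 : Integrable (fun p : A × A => γ p.2 o) (μ1.prod μ2) := integrable_comp_snd hi2
    have e1 : ∫ p, k p.1 p.2 ∂(μ1.prod μ2)
        = ∫ p : A × A, (γ p.1 o + γ p.2 o - γ p.1 p.2 - γ o o) ∂(μ1.prod μ2) := rfl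
    have i12 : Integrable (fun p : A × A => γ p.1 o + γ p.2 o) (μ1.prod μ2) := by
      exact i1.add i2
    have i123 : Integrable (fun p : A × A => γ p.1 o + γ p.2 o - γ p.1 p.2) (μ1.prod μ2) := by
      exact i12.sub hi3
    rw [e1, integral_sub i123 (integrable_const _),
      integral_sub i12 hi3, integral_add i1 i2,
      integral_comp_fst hi1.aestronglyMeasurable, integral_comp_snd hi2.aestronglyMeasurable,
      integral_const]
    simp [measure_univ]
  rw [hsplit ρ ρ ho1 ho1 hIρρ, hsplit σ σ ho2'' ho2'' hIσσ, hsplit ρ σ ho1 ho2'' hIρσ] at hEk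
  -- translate into the original integrals
  set p := (P S).toReal with hp
  set q := (Q S).toReal with hq
  have hΓρσ : ∫ p', γ p'.1 p'.2 ∂(ρ.prod σ)
      = p⁻¹ * q⁻¹ * ∫ x in S, ∫ y in S, γ x y ∂Q ∂P := by
    rw [hprod_ρσ, integral_smul_measure, ENNReal.toReal_mul, ENNReal.toReal_inv,
      ENNReal.toReal_inv, integral_prod _ hPQ]
    simp [smul_eq_mul, hp, hq, hPr, hQr]
  have hΓρρ : ∫ p', γ p'.1 p'.2 ∂(ρ.prod ρ)
      = p⁻¹ * p⁻¹ * ∫ x in S, ∫ y in S, γ x y ∂P ∂P := by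
    rw [hprod_ρρ, integral_smul_measure, ENNReal.toReal_mul, ENNReal.toReal_inv,
      integral_prod _ hPP]
    simp [smul_eq_mul, hp, hPr]
  have hΓσσ : ∫ p', γ p'.1 p'.2 ∂(σ.prod σ)
      = q⁻¹ * q⁻¹ * ∫ x in S, ∫ y in S, γ x y ∂Q ∂Q := by
    rw [hprod_σσ, integral_smul_measure, ENNReal.toReal_mul, ENNReal.toReal_inv,
      integral_prod _ hQQ]
    simp [smul_eq_mul, hq, hQr]
  rw [hΓρσ, hΓρρ, hΓσσ] at hEk
  have hp0 : p ≠ 0 := ne_of_gt hPS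
  have hq0 : q ≠ 0 := ne_of_gt hQS
  have heq : 2 * ((∫ x in S, ∫ y in S, γ x y ∂Q ∂P) / (p * q))
        - ((∫ x in S, ∫ y in S, γ x y ∂P ∂P) / p ^ 2)
        - ((∫ x in S, ∫ y in S, γ x y ∂Q ∂Q) / q ^ 2)
      = 2 * (p⁻¹ * q⁻¹ * ∫ x in S, ∫ y in S, γ x y ∂Q ∂P)
        - (p⁻¹ * p⁻¹ * ∫ x in S, ∫ y in S, γ x y ∂P ∂P)
        - (q⁻¹ * q⁻¹ * ∫ x in S, ∫ y in S, γ x y ∂Q ∂Q) := by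
    field_simp
  rw [heq]
  linarith [hEk]
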